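/- arXiv:2009.10162 — 3 statements merged into one kernel-verified Lean document; each statement's English description precedes it below -/
import Mathlib

section
/- Let (W_n)_{n≥0} be an odometer based construction sequence with coefficient sequence (k_n) and limit K. Then: (1) every x ∈ K admits, for each n, a unique parsing into n-words, i.e. a unique integer a with −K_n < a ≤ 0 such that x↾[a + j·K_n, a + (j+1)·K_n) ∈ W_n for every j ∈ ℤ; and (2) writing r_n(x) = −a for this unique a, the map φ : K → O defined by φ(x)_n = (r_{n+1}(x) mod K_{n+1}) ∈ ZMod(K_{n+1}) takes values in the odometer O associated to (k_n) (its coordinates are compatible under the canonical projections) and satisfies φ(sh x) = T_O(φ(x)) for every x ∈ K, where sh is the shift map. Thus the odometer is canonically an equivariant image of K. -/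
open MeasureTheory

namespace OdoPaper

/-- The shift map `sh` on bi-infinite sequences: `(sh x)(n) = x(n+1)`. -/
def shift {σ : Type*} (x : ℤ → σ) : ℤ → σ := fun m => x (m + 1)

/-- The `n`-th iterate (`n : ℤ`) of the shift map: `(shiftZ n x)(m) = x(m+n)`. -/
def shiftZ {σ : Type*} (n : ℤ) (x : ℤ → σ) : ℤ → σ := fun m => x (m + n)

/-- `Kseq k n = K_n`, where `K_0 = 1` and `K_{n+1} = K_n * k_n`. -/
def Kseq (k : ℕ → ℕ) : ℕ → ℕ
  | 0 => 1
  | n + 1 => Kseq k n * k n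

/-- Compatibility of a sequence `x` with `x n : ZMod (K_{n+1})` under the canonical
projections `ZMod (K_{n+2}) → ZMod (K_{n+1})`. -/
def odoCompat (k : ℕ → ℕ) (x : ∀ n : ℕ, ZMod (Kseq k (n + 1))) : Prop :=
  ∀ n : ℕ, ZMod.castHom (dvd_mul_right (Kseq k (n + 1)) (k (n + 1)))
      (ZMod (Kseq k (n + 1))) (x (n + 1)) = x n

/-- The odometer associated to the coefficient sequence `k`, as an additive subgroup of
`∏_n ZMod (K_{n+1})`. -/
def odometerSubgroup (k : ℕ → ℕ) : AddSubgroup (∀ n : ℕ, ZMod (Kseq k (n + 1))) where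
  carrier := { x | odoCompat k x }
  zero_mem' := by intro n; exact map_zero _
  add_mem' := by
    intro a b ha hb n; exact (map_add _ _ _).trans (congrArg₂ (· + ·) (ha n) (hb n))
  neg_mem' := by intro a ha n; exact (map_neg _ _).trans (congrArg Neg.neg (ha n))

/-- The odometer `O` associated to the coefficient sequence `k`. -/
abbrev Odometer (k : ℕ → ℕ) := ↥(odometerSubgroup k)

/-- The element `1̄ = (1 mod K_{n+1})_n` of the odometer. -/
def oneBar (k : ℕ → ℕ) : Odometer k := ⟨fun _ => 1, fun _ => map_one _⟩

/-- The odometer map `T_O` : translation by `1̄`. -/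
def odoMap (k : ℕ → ℕ) (x : Odometer k) : Odometer k := x + oneBar k

/-- Each factor `ZMod m` carries the discrete topology. -/
instance (n : ℕ) : TopologicalSpace (ZMod n) := ⊥
instance (n : ℕ) : DiscreteTopology (ZMod n) := ⟨rfl⟩
/-- Each factor `ZMod m` carries the discrete (Borel) σ-algebra; the product σ-algebra
on `∏_n ZMod (K_{n+1})` (and hence the subtype σ-algebra on the odometer) is then the
Borel σ-algebra of the product topology. -/
instance (n : ℕ) : MeasurableSpace (ZMod n) := ⊤
instance (n : ℕ) : DiscreteMeasurableSpace (ZMod n) := ⟨fun _ => trivial⟩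

/-- `w` occurs as a contiguous subword of `l` starting at position `p`. -/
def occursAt {σ : Type*} (w l : List σ) (p : ℕ) : Prop :=
  p + w.length ≤ l.length ∧ (l.drop p).take w.length = w

/-- The finite contiguous subword `x↾[a, a+m)` of `x : ℤ → σ`. -/
def subwordAt {σ : Type*} (x : ℤ → σ) (a : ℤ) (m : ℕ) : List σ :=
  List.ofFn (fun i : Fin m => x (a + i))

/-- The limit `K` of a construction sequence: all bi-infinite sequences each of whose finite
contiguous subwords occurs as a contiguous subword of some word in some `W n`. -/
def CSLimit {σ : Type*} (W : ℕ → Set (List σ)) : Set (ℤ → σ) :=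
  { x | ∀ (a : ℤ) (m : ℕ), ∃ n, ∃ w ∈ W n, ∃ p, occursAt (subwordAt x a m) w p }

/-- `(W_n)` is an odometer based construction sequence over the finite alphabet `σ` with
coefficient sequence `k`:  `W 0` consists of the one-letter words; every word of `W n` has
length `K_n`; every word of `W (n+1)` is a concatenation of `k n` words from `W n`; each
`W n` is uniquely readable; and every `n`-word occurs in every `(n+1)`-word. -/
structure OdometerBasedCS (σ : Type*) [Fintype σ] (k : ℕ → ℕ) (W : ℕ → Set (List σ)) :
    Prop where
  two_le : ∀ n, 2 ≤ k n
  w_zero : W 0 = { l : List σ | ∃ a : σ, l = [a] }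
  nonempty : ∀ n, (W n).Nonempty
  finite : ∀ n, (W n).Finite
  length_eq : ∀ n, ∀ w ∈ W n, w.length = Kseq k n
  concat : ∀ n, ∀ w' ∈ W (n + 1),
    ∃ g : Fin (k n) → List σ, (∀ i, g i ∈ W n) ∧ w' = (List.ofFn g).flatten
  unique_readable : ∀ n, ∀ u ∈ W n, ∀ v ∈ W n, ∀ w ∈ W n, ∀ p,
    occursAt w (u ++ v) p → p = 0 ∨ p = Kseq k n
  subword : ∀ n, ∀ w ∈ W n, ∀ w' ∈ W (n + 1), ∃ p, occursAt w w' p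

variable {σ : Type*}

lemma length_subwordAt (x : ℤ → σ) (a : ℤ) (m : ℕ) : (subwordAt x a m).length = m := by
  simp [subwordAt]

lemma getElem?_subwordAt (x : ℤ → σ) (a : ℤ) {m i : ℕ} (h : i < m) :
    (subwordAt x a m)[i]? = some (x (a + i)) := by
  simp [subwordAt, List.getElem?_ofFn, List.ofFnNthVal, h]

lemma occursAt_getElem? {w l : List σ} {p : ℕ} (h : occursAt w l p) {i : ℕ}
    (hi : i < w.length) : l[p+i]? = w[i]? := by
  conv_rhs => rw [← h.2]
  rw [List.getElem?_take, if_pos hi, List.getElem?_drop]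

lemma occursAt_of_getElem? {w l : List σ} {p : ℕ} (hlen : p + w.length ≤ l.length)
    (h : ∀ i, i < w.length → l[p+i]? = w[i]?) : occursAt w l p := by
  refine ⟨hlen, List.ext_getElem? fun i => ?_⟩
  rw [List.getElem?_take]
  by_cases hi : i < w.length
  · rw [if_pos hi, List.getElem?_drop, h i hi]
  · rw [if_neg hi, Eq.comm, List.getElem?_eq_none (by omega)]

lemma occursAt_self (l : List σ) : occursAt l l 0 := by
  refine ⟨by omega, by simp⟩

lemma occursAt_trans {u v w : List σ} {p q : ℕ} (h1 : occursAt u v p) (h2 : occursAt v w q) :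
    occursAt u w (q + p) := by
  refine occursAt_of_getElem? (by have := h1.1; have := h2.1; omega) fun i hi => ?_
  rw [add_assoc, occursAt_getElem? h2 (by have := h1.1; omega), occursAt_getElem? h1 hi]

lemma occursAt_append_left {w l : List σ} {p : ℕ} (u : List σ) (h : occursAt w l p) :
    occursAt w (u ++ l) (u.length + p) := by
  refine occursAt_of_getElem? (by have := h.1; simp; omega) fun i hi => ?_
  rw [add_assoc, List.getElem?_append_right (by omega)]
  simpa using occursAt_getElem? h hi

lemma flatten_length {L : List (List σ)} {K : ℕ} (hK : ∀ u ∈ L, u.length = K) :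
    L.flatten.length = L.length * K := by
  induction L with
  | nil => simp
  | cons u L ih =>
    simp only [List.flatten_cons, List.length_append, List.length_cons,
      hK u (by simp), ih (fun v hv => hK v (by simp [hv]))]
    ring

lemma occursAt_flatten {L : List (List σ)} {K : ℕ} (hK : ∀ u ∈ L, u.length = K)
    {q : ℕ} (hq : q < L.length) : occursAt (L[q]) L.flatten (q * K) := by
  induction L generalizing q with
  | nil => simp at hq
  | cons u L ih =>
    cases q with
    | zero =>
      simp only [List.getElem_cons_zero, List.flatten_cons, zero_mul]
      refine ⟨?_, ?_⟩
      · simp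
      · simp [List.take_left']
    | succ q =>
      have h := ih (fun v hv => hK v (by simp [hv])) (q := q) (by simpa using hq)
      have hu : u.length = K := hK u (by simp)
      have := occursAt_append_left u h
      simpa [List.getElem_cons_succ, hu, add_mul, add_comm] using this

lemma occursAt_extract {x : ℤ → σ} {c : ℤ} {m : ℕ} {w u : List σ} {p p' : ℕ}
    (h1 : occursAt (subwordAt x c m) w p) (h2 : occursAt u w p')
    (hpp : p ≤ p') (hle : p' + u.length ≤ p + m) :
    u = subwordAt x (c + (p' - p : ℕ)) u.length := by
  refine List.ext_getElem? fun i => ?_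
  by_cases hi : i < u.length
  · have e1 : w[p' + i]? = u[i]? := occursAt_getElem? h2 hi
    have e2 : w[p + ((p' - p) + i)]? = (subwordAt x c m)[(p' - p) + i]? :=
      occursAt_getElem? h1 (by rw [length_subwordAt]; omega)
    rw [getElem?_subwordAt x c (by omega)] at e2
    have : p' + i = p + ((p' - p) + i) := by omega
    rw [← e1, this, e2, getElem?_subwordAt x _ hi]
    congr 2
    push_cast [Nat.cast_sub hpp]
    ring
  · rw [List.getElem?_eq_none (by omega), List.getElem?_eq_none (by rw [length_subwordAt]; omega)]

lemma subwordAt_shift (x : ℤ → σ) (a : ℤ) (m : ℕ) :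
    subwordAt (shift x) a m = subwordAt x (a + 1) m := by
  refine List.ext_getElem? fun i => ?_
  by_cases hi : i < m
  · rw [getElem?_subwordAt _ _ hi, getElem?_subwordAt _ _ hi]
    simp [shift]; ring_nf
  · rw [List.getElem?_eq_none (by rw [length_subwordAt]; omega),
      List.getElem?_eq_none (by rw [length_subwordAt]; omega)]

lemma exists_reduce (K : ℕ) (hK : 1 ≤ K) (a : ℤ) :
    ∃ b : ℤ, -(K:ℤ) < b ∧ b ≤ 0 ∧ (K:ℤ) ∣ (a - b) := by
  refine ⟨(a - 1) % K + 1 - K, ?_, ?_, ?_⟩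
  · have := Int.emod_nonneg (a - 1) (by positivity : (K:ℤ) ≠ 0); omega
  · have := Int.emod_lt_of_pos (a - 1) (by positivity : (0:ℤ) < K); omega
  · have : a - ((a - 1) % K + 1 - K) = ((a-1) - (a - 1) % K) + K := by ring
    rw [this]
    exact dvd_add (Int.dvd_self_sub_of_emod_eq rfl) ⟨1, by ring⟩

section Main

variable {α : Type} [Fintype α] {k : ℕ → ℕ} {W : ℕ → Set (List α)}

lemma Kseq_pos (hW : OdometerBasedCS α k W) (n : ℕ) : 1 ≤ Kseq k n := by
  induction n with
  | zero => simp [Kseq]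
  | succ n ih =>
    have := hW.two_le n
    simp only [Kseq]
    nlinarith

lemma decompose (hW : OdometerBasedCS α k W) (n d : ℕ) :
    ∀ w ∈ W (n + d), ∃ L : List (List α), (∀ u ∈ L, u ∈ W n) ∧ w = L.flatten := by
  induction d with
  | zero => exact fun w hw => ⟨[w], by simpa using hw, by simp⟩
  | succ d ih =>
    intro w hw
    obtain ⟨g, hg, rfl⟩ := hW.concat (n + d) w hw
    -- each g i decomposes
    have : ∀ i, ∃ L : List (List α), (∀ u ∈ L, u ∈ W n) ∧ g i = L.flatten :=
      fun i => ih (g i) (hg i)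
    choose F hF1 hF2 using this
    refine ⟨(List.ofFn F).flatten, ?_, ?_⟩
    · intro u hu
      simp only [List.mem_flatten, List.mem_ofFn] at hu
      obtain ⟨L, ⟨i, rfl⟩, hu⟩ := hu
      exact hF1 i u hu
    · rw [List.flatten_flatten, List.map_ofFn]
      exact congrArg _ (congrArg _ (funext fun i => hF2 i))

lemma escalate (hW : OdometerBasedCS α k W) (n : ℕ) (w : List α) (hw : w ∈ W n) (d : ℕ) :
    ∃ w' ∈ W (n + d), ∃ q, occursAt w w' q := by
  induction d with
  | zero => exact ⟨w, hw, 0, occursAt_self w⟩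
  | succ d ih =>
    obtain ⟨w', hw', q, hq⟩ := ih
    obtain ⟨w'', hw''⟩ := hW.nonempty (n + d + 1)
    obtain ⟨p, hp⟩ := hW.subword (n + d) w' hw' w'' hw''
    exact ⟨w'', hw'', p + q, occursAt_trans hq hp⟩

lemma window (hW : OdometerBasedCS α k W) {x : ℤ → α} (hx : x ∈ CSLimit W)
    (n : ℕ) (c : ℤ) (m : ℕ) :
    ∃ a : ℤ, -(Kseq k n : ℤ) < a ∧ a ≤ 0 ∧ ∀ j : ℤ,
      c ≤ a + j * (Kseq k n : ℤ) → a + (j + 1) * (Kseq k n : ℤ) ≤ c + m →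
      subwordAt x (a + j * (Kseq k n : ℤ)) (Kseq k n) ∈ W n := by
  have hK : 1 ≤ Kseq k n := Kseq_pos hW n
  set K := Kseq k n with hKdef
  obtain ⟨n', w₀, hw₀, p₀, hp₀⟩ := hx c m
  set N := max n n' with hN
  obtain ⟨w, hw, q₀, hq₀⟩ := escalate hW n' w₀ hw₀ (N - n')
  rw [Nat.add_sub_cancel' (le_max_right n n')] at hw
  have hp : occursAt (subwordAt x c m) w (q₀ + p₀) := occursAt_trans hp₀ hq₀
  set p := q₀ + p₀ with hpdef
  obtain ⟨L, hL1, rfl⟩ := by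
    have : N = n + (N - n) := (Nat.add_sub_cancel' (le_max_left n n')).symm
    exact decompose hW n (N - n) w (this ▸ hw)
  have hlen : ∀ u ∈ L, u.length = K := fun u hu => hW.length_eq n u (hL1 u hu)
  have hflat : L.flatten.length = L.length * K := flatten_length hlen
  obtain ⟨b, hb1, hb2, t, ht⟩ := exists_reduce K hK (c - p)
  refine ⟨b, hb1, hb2, fun j hj1 hj2 => ?_⟩
  have hsub := length_subwordAt x c m
  have hm : p + m ≤ L.length * K := by rw [← hflat, ← hsub]; exact hp.1
  set s : ℤ := j - t with hs
  have hKs : (K : ℤ) * s = b + j * K - c + p := by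
    have h2 : (K : ℤ) * s = j * K - K * t := by rw [hs]; ring
    linarith [ht, h2]
  have hs0 : 0 ≤ s := by nlinarith [hj1]
  set q : ℕ := s.toNat with hq
  have hqs : (q : ℤ) = s := Int.toNat_of_nonneg hs0
  have hqK : (q : ℤ) * K = b + j * K - c + p := by rw [← hKs, hqs]; ring
  have hqlt : q < L.length := by
    have h1 : ((q + 1) * K : ℤ) ≤ p + m := by
      have : b + (j + 1) * K - c + p ≤ m + p := by linarith
      push_cast
      linarith [hqK, this]
    have h2 : ((q + 1) * K : ℤ) ≤ (L.length : ℤ) * K := by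
      calc ((q + 1) * K : ℤ) ≤ p + m := h1
        _ ≤ (L.length : ℤ) * K := by exact_mod_cast hm
    have h2' : (q + 1) * K ≤ L.length * K := by exact_mod_cast h2
    have := Nat.le_of_mul_le_mul_right h2' (by omega)
    omega
  have hocc : occursAt (L[q]) L.flatten (q * K) := occursAt_flatten hlen hqlt
  have hqp : p ≤ q * K := by
    have : (p : ℤ) ≤ (q : ℤ) * K := by rw [hqK]; linarith
    exact_mod_cast this
  have hql : L[q].length = K := hlen _ (List.getElem_mem hqlt)
  have hqle : q * K + L[q].length ≤ p + m := by
    rw [hql]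
    have : ((q : ℤ) * K + K : ℤ) ≤ p + m := by
      rw [hqK]; linarith
    exact_mod_cast this
  have := occursAt_extract hp hocc hqp hqle
  rw [hql] at this
  have haddr : c + ((q * K - p : ℕ) : ℤ) = b + j * K := by
    rw [Nat.cast_sub hqp]
    push_cast
    linarith [hqK]
  rw [haddr] at this
  rw [← this]
  exact hL1 _ (List.getElem_mem hqlt)

/-- `a` parses `x` into `n`-words. -/
def Parses (k : ℕ → ℕ) (W : ℕ → Set (List α)) (n : ℕ) (x : ℤ → α) (a : ℤ) : Prop :=
  ∀ j : ℤ, subwordAt x (a + j * (Kseq k n : ℤ)) (Kseq k n) ∈ W n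

lemma parses_translate {n : ℕ} {x : ℤ → α} {a : ℤ} (h : Parses k W n x a) (t : ℤ) :
    Parses k W n x (a + t * (Kseq k n : ℤ)) := by
  intro j
  have := h (t + j)
  rw [show a + t * (Kseq k n : ℤ) + j * (Kseq k n : ℤ)
      = a + (t + j) * (Kseq k n : ℤ) by ring]
  exact this

lemma subwordAt_append (x : ℤ → α) (a : ℤ) (m₁ m₂ : ℕ) :
    subwordAt x a (m₁ + m₂) = subwordAt x a m₁ ++ subwordAt x (a + m₁) m₂ := by
  refine List.ext_getElem? fun i => ?_
  rw [List.getElem?_append, length_subwordAt]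
  by_cases h1 : i < m₁
  · rw [if_pos h1, getElem?_subwordAt _ _ (by omega), getElem?_subwordAt _ _ h1]
  · rw [if_neg h1]
    by_cases h2 : i < m₁ + m₂
    · rw [getElem?_subwordAt _ _ h2, getElem?_subwordAt _ _ (by omega)]
      congr 2
      push_cast [Nat.cast_sub (by omega : m₁ ≤ i)]
      ring
    · rw [List.getElem?_eq_none (by rw [length_subwordAt]; omega),
        List.getElem?_eq_none (by rw [length_subwordAt]; omega)]

lemma parses_unique_aux (hW : OdometerBasedCS α k W) {n : ℕ} {x : ℤ → α} {a a' : ℤ}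
    (ha : -(Kseq k n : ℤ) < a ∧ a ≤ 0 ∧ Parses k W n x a)
    (ha' : -(Kseq k n : ℤ) < a' ∧ a' ≤ 0 ∧ Parses k W n x a') (hle : a ≤ a') : a = a' := by
  have hK : 1 ≤ Kseq k n := Kseq_pos hW n
  set K := Kseq k n with hKdef
  obtain ⟨h1, h2, h3⟩ := ha
  obtain ⟨h1', h2', h3'⟩ := ha'
  have hu : subwordAt x a K ∈ W n := by simpa using h3 0
  have hv : subwordAt x (a + K) K ∈ W n := by simpa using h3 1
  have hw' : subwordAt x a' K ∈ W n := by simpa using h3' 0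
  have happ : subwordAt x a K ++ subwordAt x (a + K) K = subwordAt x a (K + K) := by
    rw [subwordAt_append]
  set p : ℕ := (a' - a).toNat with hp
  have hpa : (p : ℤ) = a' - a := Int.toNat_of_nonneg (by omega)
  have hplt : (p : ℤ) < K := by omega
  have hocc : occursAt (subwordAt x a' K) (subwordAt x a K ++ subwordAt x (a + K) K) p := by
    rw [happ]
    refine occursAt_of_getElem? ?_ fun i hi => ?_
    · rw [length_subwordAt, length_subwordAt]
      have : p < K := by exact_mod_cast hplt
      omega
    · rw [length_subwordAt] at hi
      rw [getElem?_subwordAt _ _ (by omega), getElem?_subwordAt _ _ hi]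
      congr 2
      omega
  rcases hW.unique_readable n _ hu _ hv _ hw' p hocc with h0 | hKK
  · omega
  · exfalso; rw [hKK] at hplt; exact absurd hplt (by omega)

lemma parses_exists (hW : OdometerBasedCS α k W) {x : ℤ → α} (hx : x ∈ CSLimit W) (n : ℕ) :
    ∃ a : ℤ, -(Kseq k n : ℤ) < a ∧ a ≤ 0 ∧ Parses k W n x a := by
  have hK : 1 ≤ Kseq k n := Kseq_pos hW n
  set K := Kseq k n with hKdef
  set Q : ℤ → ℕ → Prop := fun a N => ∀ j : ℤ,
    -((N : ℤ) * K) ≤ a + j * K → a + (j + 1) * K ≤ (N : ℤ) * K →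
    subwordAt x (a + j * (K : ℤ)) K ∈ W n with hQ
  have hwin : ∀ N : ℕ, ∃ a, (-(K : ℤ) < a ∧ a ≤ 0) ∧ Q a N := by
    intro N
    obtain ⟨a, h1, h2, h3⟩ := window hW hx n (-((N : ℤ) * K)) (2 * N * K)
    refine ⟨a, ⟨h1, h2⟩, fun j hj1 hj2 => h3 j hj1 ?_⟩
    push_cast
    linarith
  have hanti : ∀ a (N N' : ℕ), N' ≤ N → Q a N → Q a N' := by
    intro a N N' hNN hQa j hj1 hj2
    have hmul : ((N' : ℤ)) * K ≤ (N : ℤ) * K :=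
      mul_le_mul_of_nonneg_right (by exact_mod_cast hNN) (by positivity)
    exact hQa j (by linarith) (by linarith)
  have hQall : ∃ a, (-(K : ℤ) < a ∧ a ≤ 0) ∧ ∀ N, Q a N := by
    by_contra hcon
    push_neg at hcon
    have hch : ∀ a : ℤ, ∃ N : ℕ, (-(K : ℤ) < a ∧ a ≤ 0) → ¬ Q a N := by
      intro a
      by_cases hr : (-(K : ℤ) < a ∧ a ≤ 0)
      · obtain ⟨N, hN⟩ := hcon a hr
        exact ⟨N, fun _ => hN⟩
      · exact ⟨0, fun h => absurd h hr⟩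
    choose f hf using hch
    set S : Finset ℤ := Finset.Ioc (-(K : ℤ)) 0 with hS
    obtain ⟨a, ⟨h1, h2⟩, h3⟩ := hwin (S.sup f)
    have haS : a ∈ S := Finset.mem_Ioc.mpr ⟨h1, h2⟩
    exact hf a ⟨h1, h2⟩ (hanti a _ _ (Finset.le_sup haS) h3)
  obtain ⟨a, ⟨h1, h2⟩, h3⟩ := hQall
  refine ⟨a, h1, h2, fun j => ?_⟩
  have hKpos : (0 : ℤ) ≤ K := by positivity
  refine h3 (j.natAbs + 2) j ?_ ?_
  · have e1 : (-(((j.natAbs : ℤ) + 2))) * K ≤ (j - 1) * K :=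
      mul_le_mul_of_nonneg_right (by omega) hKpos
    push_cast at e1 ⊢
    linarith [h1, e1]
  · have e1 : (j + 1) * K ≤ ((j.natAbs : ℤ) + 2) * K :=
      mul_le_mul_of_nonneg_right (by omega) hKpos
    push_cast at e1 ⊢
    linarith [h2, e1]

lemma parses_refine (hW : OdometerBasedCS α k W) {n : ℕ} {x : ℤ → α} {a : ℤ}
    (h : Parses k W (n + 1) x a) : Parses k W n x a := by
  intro s
  have hkn : 2 ≤ k n := hW.two_le n
  have hK : 1 ≤ Kseq k n := Kseq_pos hW n
  set K := Kseq k n with hKdef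
  have hK' : (Kseq k (n + 1) : ℤ) = (K : ℤ) * (k n : ℤ) := by
    show ((K * k n : ℕ) : ℤ) = _
    push_cast
    ring
  set j : ℤ := s / (k n : ℤ) with hj
  set r : ℕ := (s % (k n : ℤ)).toNat with hr
  have hr0 : 0 ≤ s % (k n : ℤ) := Int.emod_nonneg s (by positivity)
  have hrlt : s % (k n : ℤ) < (k n : ℤ) := Int.emod_lt_of_pos s (by positivity)
  have hrc : (r : ℤ) = s % (k n : ℤ) := Int.toNat_of_nonneg hr0
  have hdm : (k n : ℤ) * j + r = s := by rw [hrc, hj]; exact Int.mul_ediv_add_emod s _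
  obtain ⟨g, hg, hflat⟩ := hW.concat n _ (h j)
  set L : List (List α) := List.ofFn g with hL
  have hlen : ∀ u ∈ L, u.length = K := by
    intro u hu
    rw [hL, List.mem_ofFn] at hu
    obtain ⟨i, rfl⟩ := hu
    exact hW.length_eq n _ (hg i)
  have hrL : r < L.length := by
    rw [hL, List.length_ofFn]
    omega
  have hocc : occursAt (L[r]) L.flatten (r * K) := occursAt_flatten hlen hrL
  have hww : occursAt (subwordAt x (a + j * (Kseq k (n+1) : ℤ)) (Kseq k (n+1))) L.flatten 0 := by
    have h0 := occursAt_self (subwordAt x (a + j * (Kseq k (n+1) : ℤ)) (Kseq k (n+1)))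
    nth_rewrite 2 [hflat] at h0
    exact h0
  have hrlen : L[r].length = K := hlen _ (List.getElem_mem hrL)
  have hext := occursAt_extract hww hocc (by omega) ?_
  · rw [hrlen] at hext
    have haddr : a + j * (Kseq k (n+1) : ℤ) + ((r * K - 0 : ℕ) : ℤ) = a + s * K := by
      have h5 : ((k n : ℤ) * j + r) * K = s * K := by rw [hdm]
      rw [hK']
      push_cast [Nat.sub_zero]
      linarith [h5]
    rw [haddr] at hext
    rw [← hext]
    have hmem : L[r] ∈ L := List.getElem_mem hrL
    obtain ⟨i, hi⟩ := List.mem_ofFn.mp hmem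
    exact hi ▸ hg i
  · rw [hrlen]
    have h2 : (r + 1) * K ≤ k n * K :=
      Nat.mul_le_mul (by omega : r + 1 ≤ k n) (le_refl K)
    have h3 : Kseq k (n + 1) = K * k n := rfl
    calc r * K + K = (r + 1) * K := by ring
      _ ≤ k n * K := h2
      _ = 0 + Kseq k (n + 1) := by rw [h3]; ring

lemma shift_mem_CSLimit {x : ℤ → α} (hx : x ∈ CSLimit W) : shift x ∈ CSLimit W := by
  intro a m
  obtain ⟨n, w, hw, p, hp⟩ := hx (a + 1) m
  exact ⟨n, w, hw, p, by rwa [subwordAt_shift]⟩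

end Main



section Main2
variable {α : Type} [Fintype α] {k : ℕ → ℕ} {W : ℕ → Set (List α)}

lemma part1 (hW : OdometerBasedCS α k W) :
    ∀ x ∈ CSLimit W, ∀ n : ℕ, ∃! a : ℤ,
      -(Kseq k n : ℤ) < a ∧ a ≤ 0 ∧ Parses k W n x a := by
  intro x hx n
  obtain ⟨a, h1, h2, h3⟩ := parses_exists hW hx n
  refine ⟨a, ⟨h1, h2, h3⟩, fun b hb => ?_⟩
  rcases le_total a b with hab | hab
  · exact (parses_unique_aux hW ⟨h1, h2, h3⟩ hb hab).symm
  · exact parses_unique_aux hW hb ⟨h1, h2, h3⟩ hab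

lemma zmod_cast_eq_of_dvd {m : ℕ} {u v : ℤ} (h : (m : ℤ) ∣ (u - v)) :
    ((u : ZMod m)) = ((v : ZMod m)) := by
  have := (ZMod.intCast_zmod_eq_zero_iff_dvd (u - v) m).mpr h
  rwa [Int.cast_sub, sub_eq_zero] at this

lemma parses_succ_congr (hW : OdometerBasedCS α k W) {x : ℤ → α} (n : ℕ) {a b : ℤ}
    (hb : -(Kseq k (n + 1) : ℤ) < b ∧ b ≤ 0 ∧ Parses k W (n + 1) x b)
    (ha : -(Kseq k n : ℤ) < a ∧ a ≤ 0 ∧ Parses k W n x a) :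
    (Kseq k n : ℤ) ∣ (b - a) := by
  have hK : 1 ≤ Kseq k n := Kseq_pos hW n
  obtain ⟨b', h1', h2', t, ht⟩ := exists_reduce (Kseq k n) hK b
  have hb' : Parses k W n x b' := by
    have := parses_translate (parses_refine hW hb.2.2) (-t)
    rwa [show b + (-t) * (Kseq k n : ℤ) = b' by linarith [ht]] at this
  have : b' = a := by
    rcases le_total b' a with hab | hab
    · exact parses_unique_aux hW ⟨h1', h2', hb'⟩ ha hab
    · exact (parses_unique_aux hW ha ⟨h1', h2', hb'⟩ hab).symm
  rw [← this]
  exact ⟨t, ht⟩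

end Main2

/-- every element of the limit of an odometer based construction sequence
admits, for each `n`, a unique parsing into `n`-words (a unique offset `a` with
`-K_n < a ≤ 0` such that all the blocks `x↾[a+jK_n, a+(j+1)K_n)` are `n`-words), and the
map `φ : K → O`, `φ(x)_n = r_{n+1}(x) mod K_{n+1}` (where `r_{n+1}(x) = -a` for the level
`n+1` offset `a`), takes values in the odometer and intertwines the shift with `T_O`. -/
theorem unique_parsing_and_canonical_odometer_factor
    {α : Type} [Fintype α] (k : ℕ → ℕ) (W : ℕ → Set (List α))
    (hW : OdometerBasedCS α k W) :
    (∀ x ∈ CSLimit W, ∀ n : ℕ, ∃! a : ℤ,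
        -(Kseq k n : ℤ) < a ∧ a ≤ 0 ∧
        ∀ j : ℤ, subwordAt x (a + j * (Kseq k n : ℤ)) (Kseq k n) ∈ W n) ∧
    ∃ φ : (ℤ → α) → Odometer k,
      (∀ x ∈ CSLimit W, ∀ n : ℕ, ∀ a : ℤ,
          (-(Kseq k (n + 1) : ℤ) < a ∧ a ≤ 0 ∧
            ∀ j : ℤ, subwordAt x (a + j * (Kseq k (n + 1) : ℤ)) (Kseq k (n + 1)) ∈ W (n + 1)) →
          (φ x).1 n = ((-a : ℤ) : ZMod (Kseq k (n + 1)))) ∧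
      ∀ x ∈ CSLimit W, φ (shift x) = odoMap k (φ x) := by
  classical
  have hp1 := part1 hW
  let A : (ℤ → α) → ℕ → ℤ := fun x n =>
    if hx : x ∈ CSLimit W then (hp1 x hx n).exists.choose else 0
  have hA1 : ∀ x, ∀ hx : x ∈ CSLimit W, ∀ n : ℕ,
      -(Kseq k n : ℤ) < A x n ∧ A x n ≤ 0 ∧ Parses k W n x (A x n) := by
    intro x hx n
    simp only [A, dif_pos hx]
    exact (hp1 x hx n).exists.choose_spec
  have hA2 : ∀ x, ∀ hx : x ∈ CSLimit W, ∀ n : ℕ, ∀ b : ℤ,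
      (-(Kseq k n : ℤ) < b ∧ b ≤ 0 ∧ Parses k W n x b) → b = A x n := by
    intro x hx n b hb
    exact (hp1 x hx n).unique hb (hA1 x hx n)
  have hdvd : ∀ x, ∀ hx : x ∈ CSLimit W, ∀ n : ℕ,
      (Kseq k n : ℤ) ∣ (A x (n + 1) - A x n) := fun x hx n =>
    parses_succ_congr hW n (hA1 x hx (n + 1)) (hA1 x hx n)
  have hcompat : ∀ x : ℤ → α,
      odoCompat k (fun n => ((-(A x (n + 1)) : ℤ) : ZMod (Kseq k (n + 1)))) := by
    intro x n
    by_cases hx : x ∈ CSLimit W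
    · calc ZMod.castHom (dvd_mul_right (Kseq k (n + 1)) (k (n + 1))) (ZMod (Kseq k (n + 1)))
            ((-(A x (n + 2)) : ℤ) : ZMod (Kseq k (n + 2)))
          = ((-(A x (n + 2)) : ℤ) : ZMod (Kseq k (n + 1))) := map_intCast _ _
        _ = ((-(A x (n + 1)) : ℤ) : ZMod (Kseq k (n + 1))) := by
            refine zmod_cast_eq_of_dvd ?_
            rw [show -(A x (n + 2)) - -(A x (n + 1))
              = -(A x (n + 2) - A x (n + 1)) by ring]
            exact dvd_neg.mpr (hdvd x hx (n + 1))
    · simp only [A, dif_neg hx]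
      simp
      exact map_zero _
  refine ⟨fun x hx n => hp1 x hx n,
    ⟨fun x => ⟨fun n => ((-(A x (n + 1)) : ℤ) : ZMod (Kseq k (n + 1))), hcompat x⟩, ?_, ?_⟩⟩
  · intro x hx n a ha
    have h := hA2 x hx (n + 1) a ha
    show ((-(A x (n + 1)) : ℤ) : ZMod (Kseq k (n + 1))) = ((-a : ℤ) : ZMod (Kseq k (n + 1)))
    rw [h]
  · intro x hx
    have shx := shift_mem_CSLimit hx
    apply Subtype.ext
    funext n
    have hK' : 1 ≤ Kseq k (n + 1) := Kseq_pos hW (n + 1)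
    obtain ⟨h1, h2, h3⟩ := hA1 x hx (n + 1)
    obtain ⟨b, hb1, hb2, t, ht⟩ := exists_reduce (Kseq k (n + 1)) hK' (A x (n + 1) - 1)
    have hbp : Parses k W (n + 1) (shift x) b := by
      intro j
      rw [subwordAt_shift]
      rw [show b + j * (Kseq k (n + 1) : ℤ) + 1
        = A x (n + 1) + (j - t) * (Kseq k (n + 1) : ℤ) by linarith [ht]]
      exact h3 (j - t)
    have hbA : b = A (shift x) (n + 1) := hA2 _ shx (n + 1) b ⟨hb1, hb2, hbp⟩
    show ((-(A (shift x) (n + 1)) : ℤ) : ZMod (Kseq k (n + 1)))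
      = ((-(A x (n + 1)) : ℤ) : ZMod (Kseq k (n + 1))) + 1
    have hcast : ((-(A x (n + 1)) : ℤ) : ZMod (Kseq k (n + 1))) + 1
        = (((-(A x (n + 1)) + 1 : ℤ)) : ZMod (Kseq k (n + 1))) := by push_cast; ring
    rw [hcast]
    refine zmod_cast_eq_of_dvd ⟨t, ?_⟩
    rw [← hbA]
    linarith [ht]

end OdoPaper
end

section
/- Let (W_n)_{n≥0} be an odometer based construction sequence with limit K such that for every n, every word w ∈ W_n occurs at least twice as a contiguous subword of every word w' ∈ W_{n+1}. Then the shift on K is topologically minimal: for every x ∈ K, the orbit { shⁿ x : n ∈ ℤ } is dense in K. -/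
open MeasureTheory

namespace OdoPaper

section Aux

variable {σ : Type*}

lemma Kseq_pos_s10 {k : ℕ → ℕ} (hk : ∀ n, 2 ≤ k n) (n : ℕ) : 0 < Kseq k n := by
  induction n with
  | zero => simp [Kseq]
  | succ n ih => exact Nat.mul_pos ih (by have := hk n; omega)

lemma Kseq_mono {k : ℕ → ℕ} (hk : ∀ n, 2 ≤ k n) {a b : ℕ} (h : a ≤ b) :
    Kseq k a ≤ Kseq k b := by
  obtain ⟨j, rfl⟩ : ∃ j, b = a + j := ⟨b - a, by omega⟩
  clear h
  induction j with
  | zero => simp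
  | succ j ih =>
      have h1 : Kseq k (a + (j+1)) = Kseq k (a + j) * k (a + j) := rfl
      have h2 := hk (a + j)
      have h3 : 0 < Kseq k (a + j) := Kseq_pos_s10 hk _
      calc Kseq k a ≤ Kseq k (a + j) := ih
        _ ≤ Kseq k (a + j) * k (a + j) := Nat.le_mul_of_pos_right _ (by omega)
        _ = Kseq k (a + (j+1)) := rfl

lemma occursAt_getElem {w l : List σ} {p : ℕ} (h : occursAt w l p)
    {i : ℕ} (hi : i < w.length) (hpl : p + i < l.length) :
    l[p + i] = w[i] := by
  have h2 := h.2
  calc l[p + i] = ((l.drop p).take w.length)[i]'(by rw [h2]; exact hi) := by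
        rw [List.getElem_take, List.getElem_drop]
    _ = w[i] := by simp only [h2]

lemma flatten_map_flatten : ∀ (L : List (List (List σ))),
    (L.map List.flatten).flatten = L.flatten.flatten := by
  intro L
  induction L with
  | nil => simp
  | cons v L ih => simp [ih]

lemma length_flatten_uniform {L0 : ℕ} : ∀ (L : List (List σ)),
    (∀ v ∈ L, v.length = L0) → L.flatten.length = L.length * L0 := by
  intro L
  induction L with
  | nil => simp
  | cons v L ih =>
      intro h
      have hv : v.length = L0 := h v (by simp)
      have := ih (fun u hu => h u (by simp [hu]))
      simp only [List.flatten_cons, List.length_append, this, List.length_cons, hv]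
      ring

lemma flatten_drop_take {L0 : ℕ} : ∀ (L : List (List σ))
    (_ : ∀ v ∈ L, v.length = L0) (j : ℕ) (hj : j < L.length),
    (L.flatten.drop (j * L0)).take L0 = L[j] := by
  intro L
  induction L with
  | nil => intro _ j hj; simp at hj
  | cons v L ih =>
      intro h j hj
      have hv : v.length = L0 := h v (by simp)
      cases j with
      | zero =>
          simp only [Nat.zero_mul, List.drop_zero, List.flatten_cons, List.getElem_cons_zero]
          exact List.take_left' hv
      | succ j =>
          have harith : (j + 1) * L0 = v.length + j * L0 := by rw [hv]; ring
          simp only [List.flatten_cons, harith, List.drop_length_add_append, List.getElem_cons_succ]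
          exact ih (fun u hu => h u (by simp [hu])) j (by simpa using hj)

end Aux

section Decomp

variable {α : Type} [Fintype α] {k : ℕ → ℕ} {W : ℕ → Set (List α)}

lemma decomp (hW : OdometerBasedCS α k W) (n : ℕ) :
    ∀ (j : ℕ) (w'' : List α), w'' ∈ W (n + j) →
    ∃ L : List (List α), (∀ v ∈ L, v ∈ W n) ∧ w'' = L.flatten := by
  intro j
  induction j with
  | zero => intro w'' hw; exact ⟨[w''], by simpa using hw, by simp⟩
  | succ j ih =>
      intro w'' hw
      obtain ⟨g, hg, hflat⟩ := hW.concat (n + j) w'' hw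
      choose Ls hLmem hLflat using fun i => ih (g i) (hg i)
      refine ⟨(List.ofFn Ls).flatten, ?_, ?_⟩
      · intro v hv
        rw [List.mem_flatten] at hv
        obtain ⟨li, hli, hvli⟩ := hv
        rw [List.mem_ofFn] at hli
        obtain ⟨i, rfl⟩ := hli
        exact hLmem i v hvli
      · have : List.ofFn g = (List.ofFn Ls).map List.flatten := by
          rw [List.map_ofFn]
          congr 1
          funext i
          exact hLflat i
        rw [hflat, this, flatten_map_flatten]

lemma key (hW : OdometerBasedCS α k W) {x y : ℤ → α}
    (hx : x ∈ CSLimit W) (hy : y ∈ CSLimit W) (a : ℤ) (m : ℕ) :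
    ∃ t : ℤ, ∀ i : ℕ, i < m → x (a + i + t) = y (a + i) := by
  obtain ⟨n, w, hw, p, hop⟩ := hy a m
  have hylen : (subwordAt y a m).length = m := by simp [subwordAt]
  have hwlen : w.length = Kseq k n := hW.length_eq n w hw
  set L0 := Kseq k (n + 1) with hL0def
  have hL0pos : 0 < L0 := Kseq_pos_s10 hW.two_le _
  have hKnL0 : Kseq k n ≤ L0 := Kseq_mono hW.two_le (Nat.le_succ n)
  obtain ⟨N, w'', hw'', p', hop'⟩ := hx 0 (2 * L0)
  have hxlen : (subwordAt x 0 (2 * L0)).length = 2 * L0 := by simp [subwordAt]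
  have hw''len : w''.length = Kseq k N := hW.length_eq N w'' hw''
  have hple : p' + 2 * L0 ≤ w''.length := by
    have := hop'.1; rwa [hxlen] at this
  have hN : n + 1 ≤ N := by
    by_contra hNc
    have : Kseq k N ≤ L0 := Kseq_mono hW.two_le (by omega)
    omega
  obtain ⟨j1, rfl⟩ : ∃ j1, N = (n + 1) + j1 := ⟨N - (n + 1), by omega⟩
  obtain ⟨L, hLmem, hLflat⟩ := decomp hW (n + 1) j1 w'' hw''
  have hLlen : ∀ v ∈ L, v.length = L0 := fun v hv => hW.length_eq _ v (hLmem v hv)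
  have hflatlen : L.flatten.length = L.length * L0 := length_flatten_uniform L hLlen
  set j := p' / L0 + 1 with hjdef
  have hdm := Nat.div_add_mod p' L0
  have hmlt := Nat.mod_lt p' hL0pos
  have hmul : j * L0 = L0 * (p' / L0) + L0 := by simp only [hjdef]; ring
  have hq1 : p' ≤ j * L0 := by omega
  have hq2 : j * L0 + L0 ≤ p' + 2 * L0 := by omega
  have hjlt : j < L.length := by
    have h1 : (j + 1) * L0 ≤ L.length * L0 := by
      have : j * L0 + L0 ≤ L.length * L0 := by
        rw [← hflatlen, ← hLflat]; omega
      nlinarith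
    have := Nat.le_of_mul_le_mul_right h1 hL0pos
    omega
  set v := L[j] with hvdef
  have hvW : v ∈ W (n + 1) := hLmem v (List.getElem_mem hjlt)
  have hvlen : v.length = L0 := hLlen v (List.getElem_mem hjlt)
  have hocc_v : occursAt v w'' (j * L0) := by
    constructor
    · rw [hvlen]; omega
    · rw [hvlen, hLflat]; exact flatten_drop_take L hLlen j hjlt
  obtain ⟨r, hor⟩ := hW.subword n w hw v hvW
  have hrlen : r + Kseq k n ≤ L0 := by
    have := hor.1; rwa [hwlen, hvlen] at this
  have hpm : p + m ≤ Kseq k n := by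
    have := hop.1; rwa [hylen, hwlen] at this
  refine ⟨((j * L0 - p' + r + p : ℕ) : ℤ) - a, ?_⟩
  intro i hi
  set s : ℕ := j * L0 - p' + r + p + i with hsdef
  have hslt : s < 2 * L0 := by omega
  have hcast : a + (i : ℤ) + (((j * L0 - p' + r + p : ℕ) : ℤ) - a) = ((s : ℕ) : ℤ) := by
    push_cast [hsdef]; ring
  rw [hcast]
  have e1 : x ((s : ℕ) : ℤ) = (subwordAt x 0 (2 * L0))[s]'(by omega) := by
    simp only [subwordAt, List.getElem_ofFn]
    norm_num
  have e2 : (subwordAt x 0 (2 * L0))[s]'(by omega) = w''[p' + s]'(by omega) := by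
    rw [occursAt_getElem hop' (by omega) (by omega)]
  have e3 : w''[p' + s]'(by omega) = v[r + (p + i)]'(by omega) := by
    have hh := occursAt_getElem hocc_v (i := r + (p + i)) (by omega) (by omega)
    rw [← hh]
    congr 1
    omega
  have e4 : v[r + (p + i)]'(by omega) = w[p + i]'(by omega) :=
    occursAt_getElem hor (by omega) (by omega)
  have e5 : w[p + i]'(by omega) = (subwordAt y a m)[i]'(by omega) :=
    occursAt_getElem hop (by omega) (by omega)
  have e6 : (subwordAt y a m)[i]'(by omega) = y (a + i) := by
    simp only [subwordAt, List.getElem_ofFn]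
  rw [e1, e2, e3, e4, e5, e6]

end Decomp

/-- if every `n`-word occurs at least twice in every `(n+1)`-word, then the
shift on the limit `K` is topologically minimal: every shift-orbit is dense in `K`. -/
theorem minimal_of_every_word_occurs_twice
    {α : Type} [Fintype α] [TopologicalSpace α] [DiscreteTopology α]
    (k : ℕ → ℕ) (W : ℕ → Set (List α)) (hW : OdometerBasedCS α k W)
    (htwice : ∀ n, ∀ w ∈ W n, ∀ w' ∈ W (n + 1),
      ∃ p q, p ≠ q ∧ occursAt w w' p ∧ occursAt w w' q) :
    ∀ x ∈ CSLimit W, ∀ y ∈ CSLimit W,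
      y ∈ closure (Set.range fun n : ℤ => shiftZ n x) := by
  intro x hx y hy
  choose t ht using fun m : ℕ => key hW hx hy (-(m : ℤ)) (2 * m + 1)
  refine mem_closure_of_tendsto (f := fun m : ℕ => shiftZ (t m) x) (b := Filter.atTop) ?_ ?_
  · rw [tendsto_pi_nhds]
    intro i
    refine Filter.Tendsto.congr' ?_ tendsto_const_nhds
    filter_upwards [Filter.eventually_ge_atTop i.natAbs] with m hm
    have h1 : -(m : ℤ) ≤ i := by omega
    have h2 : i ≤ (m : ℤ) := by omega
    set jj : ℕ := (i + m).toNat with hjj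
    have hjc : (jj : ℤ) = i + m := Int.toNat_of_nonneg (by omega)
    have hjlt : jj < 2 * m + 1 := by omega
    have := ht m jj hjlt
    have harg : -(m : ℤ) + jj = i := by omega
    rw [harg] at this
    show y i = shiftZ (t m) x i
    rw [← this]
    rfl
  · exact Filter.Eventually.of_forall fun m => ⟨t m, rfl⟩

end OdoPaper
end

section
/- There exists an odometer based construction sequence over the alphabet Σ = {0,1} whose limit K has the property that for every x ∈ K, every k ∈ ℤ and every integer p ≥ 1, there exists b ∈ ℤ with x(k) ≠ x(k + b·p). In particular no element of K is a Toeplitz sequence, and no x ∈ K has any periodic position. -/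
open MeasureTheory

namespace OdoPaper

-- ==================== construction ====================

def negF : Fin 2 → Fin 2 := fun x => if x = 0 then 1 else 0

lemma negF_ne (x : Fin 2) : negF x ≠ x := by fin_cases x <;> decide

def pat (b : Bool) (k : ℕ) : List Bool := List.ofFn (fun i : Fin k => b != decide (i.val ≠ 0))

def word : ℕ → Bool → List (Fin 2)
  | 0, b => [if b then 1 else 0]
  | n+1, b => ((pat b (n+3)).map (word n)).flatten

def kk : ℕ → ℕ := fun n => n + 3

def KK : ℕ → ℕ := Kseq kk

def Wc : ℕ → Set (List (Fin 2)) := fun n => {l | ∃ b, l = word n b}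

abbrev gd (l : List (Fin 2)) (i : ℕ) : Fin 2 := l.getD i 0

lemma KK_zero : KK 0 = 1 := rfl
lemma KK_succ (n : ℕ) : KK (n+1) = KK n * (n+3) := rfl

lemma KK_pos (n : ℕ) : 1 ≤ KK n := by
  induction n with
  | zero => simp [KK_zero]
  | succ n ih => rw [KK_succ]; nlinarith

lemma KK_lt_succ (n : ℕ) : KK n + 1 ≤ KK (n+1) := by
  have := KK_pos n; rw [KK_succ]; nlinarith

lemma KK_mono {m n : ℕ} (h : m ≤ n) : KK m ≤ KK n := by
  induction n with
  | zero => simpa [Nat.le_zero.mp h]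
  | succ n ih =>
    rcases Nat.lt_or_ge m (n+1) with h'|h'
    · exact le_trans (ih (by omega)) (by have := KK_lt_succ n; omega)
    · have : m = n + 1 := by omega
      simp [this]

lemma KK_ge (n : ℕ) : n + 1 ≤ KK n := by
  induction n with
  | zero => simp [KK_zero]
  | succ n ih => have := KK_lt_succ n; omega

lemma pat_length (b : Bool) (k : ℕ) : (pat b k).length = k := by simp [pat]

lemma pat_getD (b : Bool) (k i : ℕ) (h : i < k) :
    (pat b k).getD i false = (b != decide (i ≠ 0)) := by
  rw [List.getD_eq_getElem _ _ (by simpa [pat_length])]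
  simp [pat]

lemma word_length (n : ℕ) (b : Bool) : (word n b).length = KK n := by
  induction n generalizing b with
  | zero => simp [word, KK_zero]
  | succ n ih =>
    rw [word, List.length_flatten, List.map_map]
    have : (List.map (List.length ∘ word n) (pat b (n+3))) = List.replicate (n+3) (KK n) := by
      apply List.ext_getElem
      · simp [pat_length]
      · intro j h1 h2
        simp only [List.getElem_map, Function.comp, List.getElem_replicate]
        exact ih _
    rw [this, KK_succ]
    simp [List.sum_replicate, Nat.mul_comm]

lemma word_succ (n : ℕ) (b : Bool) : word (n+1) b = ((pat b (n+3)).map (word n)).flatten := rfl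

-- getD of a flattened list of blocks of constant length K
lemma flatten_getD (L : List (List (Fin 2))) (K : ℕ) (hK : ∀ l ∈ L, l.length = K)
    (c s : ℕ) (hc : c < L.length) (hs : s < K) :
    (L.flatten).getD (c * K + s) 0 = (L.getD c []).getD s 0 := by
  induction L generalizing c with
  | nil => simp at hc
  | cons hd tl ih =>
    rcases Nat.eq_zero_or_pos c with rfl | hcpos
    · simp only [List.flatten_cons, Nat.zero_mul, Nat.zero_add, List.getD_cons_zero]
      rw [List.getD_append _ _ _ _ (by rw [hK hd (by simp)]; omega)]
    · obtain ⟨c', rfl⟩ : ∃ c', c = c' + 1 := ⟨c - 1, by omega⟩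
      simp only [List.flatten_cons]
      rw [List.getD_append_right _ _ _ _ (by rw [hK hd (by simp)]; nlinarith)]
      rw [hK hd (by simp)]
      have : (c' + 1) * K + s - K = c' * K + s := by ring_nf; omega
      rw [this]
      simpa using ih (fun l hl => hK l (by simp [hl])) c' (by simpa using hc)

lemma word_getD (n : ℕ) (b : Bool) (c s : ℕ) (hc : c < n + 3) (hs : s < KK n) :
    gd (word (n+1) b) (c * KK n + s) = gd (word n (b != decide (c ≠ 0))) s := by
  rw [word_succ]
  have hlens : ∀ l ∈ (pat b (n+3)).map (word n), l.length = KK n := by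
    intro l hl
    simp only [List.mem_map] at hl
    obtain ⟨a, _, rfl⟩ := hl
    exact word_length n a
  show _root_.List.getD _ _ _ = _
  rw [flatten_getD _ (KK n) hlens c s (by simpa [pat_length]) hs]
  have h1 : ((pat b (n+3)).map (word n)).getD c [] = word n (b != decide (c ≠ 0)) := by
    rw [List.getD_eq_getElem _ _ (by simpa [pat_length])]
    rw [List.getElem_map]
    congr 1
    show (List.ofFn (fun i : Fin (n+3) => b != decide (i.val ≠ 0)))[c]'(by simp only [List.length_ofFn]; exact hc) = _
    rw [List.getElem_ofFn]
  rw [h1]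

lemma word_map_neg (n : ℕ) (b : Bool) : (word n b).map negF = word n (!b) := by
  induction n generalizing b with
  | zero => cases b <;> simp [word, negF]
  | succ n ih =>
    rw [word_succ, word_succ, List.map_flatten, List.map_map]
    congr 1
    have hpat : pat (!b) (n+3) = (pat b (n+3)).map (fun c => !c) := by
      simp only [pat, List.map_ofFn]
      congr 1
      funext i
      cases b <;> simp
    rw [hpat, List.map_map]
    congr 1
    funext c
    simpa using ih c

lemma word_getD_zero (n : ℕ) (b : Bool) : gd (word n b) 0 = if b then 1 else 0 := by
  induction n generalizing b with
  | zero => cases b <;> simp [word]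
  | succ n ih =>
    have := word_getD n b 0 0 (by omega) (KK_pos n)
    simpa using this.trans (by simpa using ih b)

lemma word_ne (n : ℕ) : word n false ≠ word n true := by
  intro h
  have h0 := word_getD_zero n false
  have h1 := word_getD_zero n true
  rw [h] at h0
  rw [h0] at h1
  simp at h1

lemma word_inj (n : ℕ) {b b' : Bool} (h : word n b = word n b') : b = b' := by
  cases b <;> cases b' <;> first
    | rfl
    | exact absurd h (word_ne n)
    | exact absurd h.symm (word_ne n)

lemma word_getD_ne (n : ℕ) (b : Bool) (j : ℕ) (hj : j < KK n) :
    gd (word n b) j ≠ gd (word n (!b)) j := by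
  rw [← word_map_neg]
  have hlen : j < (word n b).length := by rwa [word_length]
  simp only [gd]
  rw [List.getD_eq_getElem _ _ hlen, List.getD_eq_getElem _ _ (by simpa)]
  rw [List.getElem_map]
  exact (negF_ne _).symm

-- occursAt pointwise characterization
lemma occursAt_iff {w l : List (Fin 2)} {q : ℕ} :
    occursAt w l q ↔ q + w.length ≤ l.length ∧ ∀ j < w.length, gd l (q + j) = gd w j := by
  constructor
  · rintro ⟨h1, h2⟩
    refine ⟨h1, fun j hj => ?_⟩
    have hl : q + j < l.length := by omega
    have htt : j < (List.take w.length (List.drop q l)).length := by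
      simp only [List.length_take, List.length_drop]; omega
    have h3 : gd (List.take w.length (List.drop q l)) j = gd w j := by rw [h2]
    simp only [gd] at h3 ⊢
    rw [List.getD_eq_getElem _ _ htt] at h3
    rw [List.getElem_take, List.getElem_drop] at h3
    rw [List.getD_eq_getElem _ _ hl]
    exact h3
  · rintro ⟨h1, h2⟩
    refine ⟨h1, ?_⟩
    apply List.ext_getElem
    · simp [List.length_take, List.length_drop]; omega
    · intro j hj1 hj2
      have hj : j < w.length := hj2
      have := h2 j hj
      simp only [gd] at this
      rw [List.getD_eq_getElem _ _ (show q + j < l.length by omega),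
          List.getD_eq_getElem _ _ hj] at this
      rw [List.getElem_take, List.getElem_drop]
      exact this


lemma list_eq_of_gd {l l' : List (Fin 2)} (hlen : l.length = l'.length)
    (h : ∀ i < l.length, gd l i = gd l' i) : l = l' := by
  apply List.ext_getElem hlen
  intro i h1 h2
  have := h i h1
  simp only [gd] at this
  rwa [List.getD_eq_getElem _ _ h1, List.getD_eq_getElem _ _ h2] at this

lemma lt_KK_mul {t n m : ℕ} (ht : t < KK n) (hm : 1 ≤ m) : t < KK n * m := by
  have h1 : KK n * 1 ≤ KK n * m := Nat.mul_le_mul_left _ hm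
  have h2 : KK n * 1 = KK n := by ring
  linarith

lemma block_lt {i t n m : ℕ} (hi : i < m) (ht : t < KK n) : i * KK n + t < KK n * m := by
  have h1 : (i+1) * KK n ≤ m * KK n := Nat.mul_le_mul_right _ (by omega)
  have h2 : (i+1) * KK n = i * KK n + KK n := by ring
  have h3 : m * KK n = KK n * m := Nat.mul_comm _ _
  linarith

lemma pats_gd (n : ℕ) (b1 b2 : Bool) (t : ℕ) (ht : t < 2*(n+3)) :
    (pat b1 (n+3) ++ pat b2 (n+3)).getD t false =
      if t < n+3 then (b1 != decide (t ≠ 0)) else (b2 != decide (t - (n+3) ≠ 0)) := by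
  rcases Nat.lt_or_ge t (n+3) with h | h
  · rw [if_pos h, List.getD_append _ _ _ _ (by simpa [pat_length]), pat_getD _ _ _ h]
  · rw [if_neg (by omega), List.getD_append_right _ _ _ _ (by simpa [pat_length])]
    rw [pat_length, pat_getD _ _ _ (by omega)]

lemma append_gd (n : ℕ) (bu bv : Bool) (c s : ℕ) (hc : c < 2*(n+3)) (hs : s < KK n) :
    gd (word (n+1) bu ++ word (n+1) bv) (c * KK n + s)
      = gd (word n ((pat bu (n+3) ++ pat bv (n+3)).getD c false)) s := by
  have hL := KK_pos n
  have hlu : (word (n+1) bu).length = (n+3) * KK n := by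
    rw [word_length, KK_succ]; ring
  rw [pats_gd n bu bv c hc]
  rcases Nat.lt_or_ge c (n+3) with h | h
  · rw [if_pos h]
    simp only [gd]
    rw [List.getD_append _ _ _ _ (by
      rw [hlu]
      have hb := block_lt h hs
      linarith [Nat.mul_comm (KK n) (n+3)])]
    exact word_getD n bu c s h hs
  · rw [if_neg (by omega)]
    simp only [gd]
    rw [List.getD_append_right _ _ _ _ (by
      rw [hlu]
      have h1 : (n+3) * KK n ≤ c * KK n := Nat.mul_le_mul_right _ h
      linarith)]
    rw [hlu]
    have harith : c * KK n + s - (n+3) * KK n = (c - (n+3)) * KK n + s := by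
      have h2 : c * KK n = (c - (n+3)) * KK n + (n+3) * KK n := by
        rw [← Nat.add_mul]; congr 1; omega
      omega
    rw [harith]
    exact word_getD n bv (c - (n+3)) s (by omega) hs

theorem word_ur : ∀ (n : ℕ) (bu bv bw : Bool) (q : ℕ),
    occursAt (word n bw) (word n bu ++ word n bv) q → q = 0 ∨ q = KK n := by
  intro n
  induction n with
  | zero =>
    intro bu bv bw q h
    have h1 := h.1
    simp only [List.length_append, word_length, KK_zero] at h1
    rw [KK_zero]
    omega
  | succ n ih =>
    intro bu bv bw q hocc
    rw [occursAt_iff] at hocc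
    obtain ⟨hlen, hpt⟩ := hocc
    have hL := KK_pos n
    have hKs : KK (n+1) = KK n * (n+3) := KK_succ n
    rw [List.length_append, word_length, word_length, word_length] at hlen
    rw [word_length] at hpt
    have hq : q ≤ KK (n+1) := by omega
    set c := q / KK n with hc
    set s := q % KK n with hs
    have hqcs : q = c * KK n + s := by
      rw [hc, hs, Nat.mul_comm]
      exact (Nat.div_add_mod q (KK n)).symm
    have hslt : s < KK n := by
      rw [hs]; exact Nat.mod_lt _ (by omega)
    have hq' : q ≤ KK n * (n+3) := by rw [← hKs]; exact hq
    have hck : c ≤ n + 3 := by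
      by_contra hcon
      push_neg at hcon
      have h1 : (n+4) * KK n ≤ c * KK n := Nat.mul_le_mul_right _ hcon
      have h2 : (n+4) * KK n = KK n * (n+3) + KK n := by ring
      linarith
    have hs0 : s = 0 := by
      by_contra hs0
      have hclt : c < n + 3 := by
        rcases Nat.lt_or_ge c (n+3) with h | h
        · exact h
        · exfalso
          have hc3 : c = n + 3 := by omega
          rw [hc3] at hqcs
          have hmc : (n+3) * KK n = KK n * (n+3) := Nat.mul_comm _ _
          have h1 : 1 ≤ s := by omega
          linarith
      set b1 := (pat bu (n+3) ++ pat bv (n+3)).getD c false with hb1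
      set b2 := (pat bu (n+3) ++ pat bv (n+3)).getD (c+1) false with hb2
      have hoc : occursAt (word n bw) (word n b1 ++ word n b2) s := by
        rw [occursAt_iff]
        constructor
        · rw [List.length_append, word_length, word_length, word_length]; omega
        · intro j hj
          rw [word_length] at hj
          have hw0 : gd (word (n+1) bw) j = gd (word n bw) j := by
            have := word_getD n bw 0 j (by omega) hj
            simpa using this
          have hbig : gd (word (n+1) bu ++ word (n+1) bv) (q + j) = gd (word n bw) j := by
            rw [hpt j (by rw [hKs]; exact lt_KK_mul hj (by omega)), hw0]
          rcases Nat.lt_or_ge (s + j) (KK n) with h | h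
          · have e1 := append_gd n bu bv c (s+j) (by omega) h
            rw [← hb1] at e1
            have harith : q + j = c * KK n + (s + j) := by
              rw [hqcs]; ring
            rw [harith, e1] at hbig
            simp only [gd] at hbig ⊢
            rw [List.getD_append _ _ _ _ (by rw [word_length]; omega)]
            exact hbig
          · have hsj : s + j - KK n < KK n := by omega
            have e1 := append_gd n bu bv (c+1) (s + j - KK n) (by omega) hsj
            rw [← hb2] at e1
            have harith : q + j = (c+1) * KK n + (s + j - KK n) := by
              obtain ⟨d, hd⟩ : ∃ d, s + j = KK n + d := ⟨s + j - KK n, by omega⟩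
              have hd2 : s + j - KK n = d := by omega
              have hexp : (c+1) * KK n = c * KK n + KK n := by ring
              rw [hd2]
              linarith
            rw [harith, e1] at hbig
            simp only [gd] at hbig ⊢
            rw [List.getD_append_right _ _ _ _ (by rw [word_length]; omega)]
            rw [word_length]
            exact hbig
      rcases ih b1 b2 bw s hoc with h | h
      · exact hs0 h
      · omega
    rw [hs0, Nat.add_zero] at hqcs
    have hpateq : ∀ i, i < n + 3 →
        (pat bu (n+3) ++ pat bv (n+3)).getD (c+i) false = (pat bw (n+3)).getD i false := by
      intro i hi
      have hweq : word n ((pat bu (n+3) ++ pat bv (n+3)).getD (c+i) false)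
          = word n ((pat bw (n+3)).getD i false) := by
        apply list_eq_of_gd (by rw [word_length, word_length])
        intro t ht
        rw [word_length] at ht
        have e1 := append_gd n bu bv (c+i) t (by omega) ht
        have e3 := hpt (i * KK n + t) (by rw [hKs]; exact block_lt hi ht)
        have harith : q + (i * KK n + t) = (c + i) * KK n + t := by
          rw [hqcs]; ring
        rw [harith] at e3
        have e2 := word_getD n bw i t hi ht
        rw [← e1, e3, e2, pat_getD _ _ _ hi]
      exact word_inj n hweq
    have hc0k : c = 0 ∨ c = n + 3 := by
      have M0 := hpateq 0 (by omega)
      simp only [Nat.add_zero] at M0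
      have M1 := hpateq 1 (by omega)
      have M2 := hpateq 2 (by omega)
      rw [pats_gd n bu bv c (by omega)] at M0
      rw [pats_gd n bu bv (c+1) (by omega)] at M1
      rw [pats_gd n bu bv (c+2) (by omega)] at M2
      rw [pat_getD _ _ _ (by omega : (0:ℕ) < n+3)] at M0
      rw [pat_getD _ _ _ (by omega : (1:ℕ) < n+3)] at M1
      rw [pat_getD _ _ _ (by omega : (2:ℕ) < n+3)] at M2
      by_contra hcon
      push_neg at hcon
      obtain ⟨hc0, hckk⟩ := hcon
      have hclt : c < n + 3 := by omega
      rw [if_pos hclt] at M0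
      rcases Nat.lt_or_ge (c+1) (n+3) with h1 | h1
      · rw [if_pos h1] at M1
        simp [hc0] at M0 M1
        cases bu <;> cases bw <;> simp at M0 M1
      · have hc1 : c + 1 = n + 3 := by omega
        rw [if_neg (by omega)] at M1
        rw [if_neg (by omega)] at M2
        have e1 : c + 1 - (n+3) = 0 := by omega
        have e2 : c + 2 - (n+3) = 1 := by omega
        rw [e1] at M1
        rw [e2] at M2
        simp at M1 M2
        cases bv <;> cases bw <;> simp at M1 M2
    rcases hc0k with h | h
    · left; rw [hqcs, h, Nat.zero_mul]
    · right; rw [hqcs, h, hKs]; ring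


lemma word_nc (n : ℕ) (b : Bool) (p r : ℕ) (hp : 1 ≤ p) (hpn : p ≤ n + 2) (hpK : p ≤ KK n)
    (hr : r < p) :
    ∃ j1 j2, j1 < KK (n+1) ∧ j2 < KK (n+1) ∧ j1 % p = r ∧ j2 % p = r ∧
      gd (word (n+1) b) j1 ≠ gd (word (n+1) b) j2 := by
  have hL := KK_pos n
  have hKs := KK_succ n
  refine ⟨r, r + p * KK n, ?_, ?_, Nat.mod_eq_of_lt hr, ?_, ?_⟩
  · have : KK n ≤ KK (n+1) := KK_mono (by omega)
    omega
  · have h1 : (p+1) * KK n ≤ (n+3) * KK n := Nat.mul_le_mul_right _ (by omega)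
    have h2 : (p+1) * KK n = p * KK n + KK n := by ring
    have h3 : (n+3) * KK n = KK n * (n+3) := Nat.mul_comm _ _
    omega
  · rw [Nat.add_mul_mod_self_left, Nat.mod_eq_of_lt hr]
  · have e1 : gd (word (n+1) b) r = gd (word n b) r := by
      have := word_getD n b 0 r (by omega) (by omega)
      simpa using this
    have e2 : gd (word (n+1) b) (r + p * KK n) = gd (word n (!b)) r := by
      have h := word_getD n b p r (by omega) (by omega)
      have hidx : p * KK n + r = r + p * KK n := by ring
      rw [hidx] at h
      rw [h]
      have hp0 : p ≠ 0 := by omega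
      have : (b != decide (p ≠ 0)) = !b := by simp [hp0]
      rw [this]
    rw [e1, e2]
    exact word_getD_ne n b r (by omega)

lemma bw_length (g : List Bool) (n : ℕ) :
    ((g.map (word n)).flatten).length = g.length * KK n := by
  induction g with
  | nil => simp
  | cons hd tl ih =>
    simp only [List.map_cons, List.flatten_cons, List.length_append, word_length, ih,
      List.length_cons]
    ring

lemma bw_gd (g : List Bool) (n c s : ℕ) (hc : c < g.length) (hs : s < KK n) :
    gd ((g.map (word n)).flatten) (c * KK n + s) = gd (word n (g.getD c false)) s := by
  show _root_.List.getD _ _ _ = _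
  rw [flatten_getD _ (KK n) (by
      intro l hl
      simp only [List.mem_map] at hl
      obtain ⟨a, _, rfl⟩ := hl
      exact word_length n a) c s (by simpa) hs]
  congr 1
  rw [List.getD_eq_getElem _ _ (by simpa), List.getElem_map, List.getD_eq_getElem _ _ hc]

lemma word_decomp (N : ℕ) : ∀ (n : ℕ), n ≤ N → ∀ (b : Bool),
    ∃ g : List Bool, word N b = (g.map (word n)).flatten := by
  induction N with
  | zero =>
    intro n h b
    have : n = 0 := by omega
    subst this
    exact ⟨[b], by simp⟩
  | succ N ih =>
    intro n h b
    rcases Nat.lt_or_ge n (N+1) with h' | h'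
    · have hn : n ≤ N := by omega
      obtain ⟨gf, hgf⟩ := ih n hn false
      obtain ⟨gt, hgt⟩ := ih n hn true
      refine ⟨((pat b (N+3)).map (fun c => if c then gt else gf)).flatten, ?_⟩
      rw [word_succ]
      rw [List.map_flatten, List.map_map]
      rw [List.flatten_flatten]
      rw [List.map_map]
      congr 1
      apply List.map_congr_left
      intro c _
      cases c
      · simpa using hgf
      · simpa using hgt
    · have : n = N + 1 := by omega
      subst this
      exact ⟨[b], by simp⟩

lemma subword_gd (x : ℤ → Fin 2) (a : ℤ) (m i : ℕ) (h : i < m) :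
    gd (subwordAt x a m) i = x (a + i) := by
  simp only [gd, subwordAt]
  rw [List.getD_eq_getElem _ _ (by simpa)]
  rw [List.getElem_ofFn]

lemma exists_aligned (x : ℤ → Fin 2) (hx : x ∈ CSLimit Wc) (n : ℕ) :
    ∃ (a : ℤ) (b : Bool), ∀ j : ℕ, j < KK n → x (a + (j:ℤ)) = gd (word n b) j := by
  obtain ⟨N, w', hw', q, hocc⟩ := hx 0 (2 * KK n)
  obtain ⟨bN, rfl⟩ := hw'
  rw [occursAt_iff] at hocc
  obtain ⟨hlen, hpt⟩ := hocc
  have hL := KK_pos n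
  have hsub_len : (subwordAt x 0 (2 * KK n)).length = 2 * KK n := by
    simp [subwordAt]
  rw [hsub_len, word_length] at hlen
  rw [hsub_len] at hpt
  have hNn : n ≤ N := by
    by_contra hcon
    push_neg at hcon
    have h1 := KK_mono (show N ≤ n by omega)
    omega
  obtain ⟨g, hg⟩ := word_decomp N n hNn bN
  have hglen : g.length * KK n = KK N := by
    have h1 := word_length N bN
    rw [hg, bw_length] at h1
    exact h1
  set L := KK n with hLd
  set c := (q + L - 1) / L with hcd
  set ρ := (q + L - 1) % L with hrd
  have hdm : L * c + ρ = q + L - 1 := Nat.div_add_mod (q + L - 1) L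
  have hrlt : ρ < L := by
    rw [hrd]; exact Nat.mod_lt _ (by omega)
  have hcc : c * L = L * c := Nat.mul_comm _ _
  have h1 : q ≤ c * L := by omega
  have h2 : c * L < q + L := by omega
  have hcg : c < g.length := by
    have h3 : (c+1) * L ≤ g.length * L := by
      have hx1 : (c+1) * L = c * L + L := by ring
      omega
    have h4 := Nat.le_of_mul_le_mul_right h3 (show 0 < L by omega)
    omega
  refine ⟨((c * L - q : ℕ) : ℤ), g.getD c false, ?_⟩
  intro j hj
  have hi : c * L - q + j < 2 * L := by omega
  have e1 := hpt (c * L - q + j) hi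
  have e2 : q + (c * L - q + j) = c * L + j := by omega
  rw [e2] at e1
  have e3 : gd (word N bN) (c * L + j) = gd (word n (g.getD c false)) j := by
    rw [hg]
    exact bw_gd g n c j hcg hj
  have e4 := subword_gd x 0 (2 * L) (c * L - q + j) hi
  rw [e4] at e1
  rw [← e3, e1]
  congr 1
  push_cast
  ring


lemma main_key (x : ℤ → Fin 2) (hx : x ∈ CSLimit Wc) (i : ℤ) (p : ℕ) (hp : 1 ≤ p) :
    ∃ b : ℤ, x i ≠ x (i + b * (p : ℤ)) := by
  obtain ⟨a, bb, hab⟩ := exists_aligned x hx ((p-1)+1)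
  have hKp : p ≤ KK (p-1) := by
    have := KK_ge (p-1)
    omega
  have hppos : (0:ℤ) < p := by exact_mod_cast hp
  set r : ℕ := ((i - a) % p).toNat with hrd
  have hr0 : 0 ≤ (i - a) % (p:ℤ) := Int.emod_nonneg _ (by omega)
  have hr1 : (i - a) % (p:ℤ) < p := Int.emod_lt_of_pos _ hppos
  have hrcast : (r : ℤ) = (i - a) % p := by rw [hrd]; exact Int.toNat_of_nonneg hr0
  have hrp : r < p := by omega
  obtain ⟨j1, j2, hj1, hj2, hm1, hm2, hne⟩ := word_nc (p-1) bb p r hp (by omega) hKp hrp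
  have e1 := hab j1 hj1
  have e2 := hab j2 hj2
  have hne' : x (a + (j1:ℤ)) ≠ x (a + (j2:ℤ)) := by
    rw [e1, e2]; exact hne
  have hdvd : ∀ jj : ℕ, jj % p = r → ∃ b : ℤ, a + (jj:ℤ) = i + b * p := by
    intro jj hjj
    have h1 : ((jj % p : ℕ) : ℤ) = (i - a) % p := by rw [hjj, hrcast]
    push_cast at h1
    have h2 : (p:ℤ) ∣ (i - a) - jj := Int.ModEq.dvd (h1 : (jj:ℤ) ≡ (i-a) [ZMOD (p:ℤ)])
    obtain ⟨t, ht⟩ := h2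
    refine ⟨-t, ?_⟩
    have hxx : (-t) * (p:ℤ) = -((p:ℤ) * t) := by ring
    omega
  obtain ⟨b1, hb1⟩ := hdvd j1 hm1
  obtain ⟨b2, hb2⟩ := hdvd j2 hm2
  by_cases hc : x i = x (a + (j1:ℤ))
  · refine ⟨b2, ?_⟩
    rw [← hb2, hc]
    exact hne'
  · exact ⟨b1, by rw [← hb1]; exact hc⟩

lemma main_ods : OdometerBasedCS (Fin 2) kk Wc := by
  constructor
  · intro n
    show 2 ≤ n + 3
    omega
  · ext l
    constructor
    · rintro ⟨b, rfl⟩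
      exact ⟨if b then 1 else 0, by simp [word]⟩
    · rintro ⟨a, rfl⟩
      have ha : a = 0 ∨ a = 1 := by omega
      rcases ha with rfl | rfl
      · exact ⟨false, by simp [word]⟩
      · exact ⟨true, by simp [word]⟩
  · intro n
    exact ⟨word n false, ⟨false, rfl⟩⟩
  · intro n
    have hsub : Wc n ⊆ (fun b : Bool => word n b) '' Set.univ := by
      rintro l ⟨b, rfl⟩
      exact ⟨b, trivial, rfl⟩
    exact (Set.finite_univ.image _).subset hsub
  · rintro n w ⟨b, rfl⟩
    exact word_length n b
  · rintro n w' ⟨b, rfl⟩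
    refine ⟨fun i => word n (b != decide (i.val ≠ 0)), fun i => ⟨_, rfl⟩, ?_⟩
    rw [word_succ, pat, List.map_ofFn]
    rfl
  · rintro n u ⟨bu, rfl⟩ v ⟨bv, rfl⟩ w ⟨bw, rfl⟩ q hocc
    exact word_ur n bu bv bw q hocc
  · rintro n w ⟨b, rfl⟩ w' ⟨b', rfl⟩
    refine ⟨if b = b' then 0 else KK n, ?_⟩
    rw [occursAt_iff]
    have hL := KK_pos n
    constructor
    · rw [word_length, word_length, KK_succ]
      have h1 : KK n * 2 ≤ KK n * (n+3) := Nat.mul_le_mul_left _ (by omega)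
      have h2 : KK n * 2 = KK n + KK n := by ring
      split_ifs <;> omega
    · intro j hj
      rw [word_length] at hj
      split_ifs with hbb
      · subst hbb
        have h := word_getD n b 0 j (by omega) hj
        simpa using h
      · have h := word_getD n b' 1 j (by omega) hj
        have hone : (1:ℕ) * KK n = KK n := by ring
        rw [hone] at h
        rw [h]
        have hval : (b' != decide ((1:ℕ) ≠ 0)) = b := by
          cases b <;> cases b' <;> simp_all
        rw [hval]



/-- there is an odometer based construction sequence over the two-letter
alphabet `{0,1}` whose limit `K` contains no sequence with any periodic position: for all
`x ∈ K`, `i ∈ ℤ` and `p ≥ 1` there is `b ∈ ℤ` with `x(i) ≠ x(i + bp)`. In particular no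
`x ∈ K` has a periodic position, and no `x ∈ K` is a Toeplitz sequence. -/
theorem exists_odometer_based_system_without_periodic_positions :
    ∃ (k : ℕ → ℕ) (W : ℕ → Set (List (Fin 2))),
      OdometerBasedCS (Fin 2) k W ∧
      (∀ x ∈ CSLimit W, ∀ (i : ℤ) (p : ℕ), 1 ≤ p →
        ∃ b : ℤ, x i ≠ x (i + b * (p : ℤ))) ∧
      (∀ x ∈ CSLimit W, ∀ (i : ℤ) (p : ℕ), 1 ≤ p →
        ¬ ∀ m : ℤ, x (i + m * (p : ℤ)) = x i) ∧
      (∀ x ∈ CSLimit W,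
        ¬ ∀ i : ℤ, ∃ p : ℕ, 1 ≤ p ∧ ∀ m : ℤ, x (i + m * (p : ℤ)) = x i) := by
  refine ⟨kk, Wc, main_ods, ?_, ?_, ?_⟩
  · intro x hx i p hp
    exact main_key x hx i p hp
  · intro x hx i p hp hper
    obtain ⟨b, hb⟩ := main_key x hx i p hp
    exact hb (hper b).symm
  · intro x hx hall
    obtain ⟨p, hp, hper⟩ := hall 0
    obtain ⟨b, hb⟩ := main_key x hx 0 p hp
    exact hb (hper b).symm

end OdoPaper
end
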